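/- Let γ be a nonconstant polynomial with complex coefficients, let c ∈ ℂ, and let e₁, e₂ be complex numbers. If e₁ + (e₁ − e₂)·exp(−γ(z)) = (e₂ − e₁)·(exp(γ(z+c)) − exp(γ(z))) for all z ∈ ℂ, then e₁ = e₂. -/

import Mathlib

open Polynomial Filter Complex

lemma re_eval_tendsto_atBot (q : Polynomial ℂ) (hn : 0 < q.natDegree)
    (hl : q.leadingCoeff = -1) :
    Tendsto (fun r : ℝ => (q.eval (r : ℂ)).re) atTop atBot := by
  set n := q.natDegree with hn'
  set P : Polynomial ℝ := ∑ i ∈ Finset.range (n + 1), C (q.coeff i).re * X ^ i with hP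
  have hcoeff : ∀ j, P.coeff j = if j < n + 1 then (q.coeff j).re else 0 := by
    intro j
    simp [hP, Polynomial.finset_sum_coeff, Polynomial.coeff_C_mul, Polynomial.coeff_X_pow]
  have hPn : P.coeff n = -1 := by
    rw [hcoeff, if_pos (by omega)]
    simpa [Polynomial.leadingCoeff, ← hn'] using congrArg Complex.re hl
  have hdegle : P.natDegree ≤ n := by
    apply Polynomial.natDegree_le_iff_coeff_eq_zero.2
    intro j hj
    have hj' : ¬ j < n + 1 := by omega
    rw [hcoeff, if_neg hj']
  have hdeg : P.natDegree = n := le_antisymm hdegle (Polynomial.le_natDegree_of_ne_zero (by rw [hPn]; norm_num))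
  have hlead : P.leadingCoeff = -1 := by rw [Polynomial.leadingCoeff, hdeg, hPn]
  have hP0 : P ≠ 0 := fun h => by simp [h] at hlead
  have hdpos : 0 < P.degree := by
    rw [Polynomial.degree_eq_natDegree hP0, hdeg]
    exact_mod_cast hn
  have := Polynomial.tendsto_atBot_of_leadingCoeff_nonpos P hdpos (by rw [hlead]; norm_num)
  convert this using 2 with r
  rw [Polynomial.eval_eq_sum_range, hP, Polynomial.eval_finset_sum, Complex.re_sum]
  refine Finset.sum_congr rfl fun i _ => ?_
  simp [Complex.mul_re, ← Complex.ofReal_pow]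

theorem e1_eq_e2_of_difference_equation' (γ : Polynomial ℂ) (hγ : 0 < γ.natDegree)
    (c e₁ e₂ : ℂ)
    (h : ∀ z : ℂ, e₁ + (e₁ - e₂) * Complex.exp (-γ.eval z) =
        (e₂ - e₁) * (Complex.exp (γ.eval (z + c)) - Complex.exp (γ.eval z))) :
    e₁ = e₂ := by
  set n := γ.natDegree with hn
  have ha : γ.leadingCoeff ≠ 0 := Polynomial.leadingCoeff_ne_zero.2 (fun h0 => by rw [hn, h0] at hγ; simp at hγ)
  obtain ⟨ω, hω⟩ := IsAlgClosed.exists_pow_nat_eq (-γ.leadingCoeff⁻¹) hγ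
  have hω0 : ω ≠ 0 := by
    intro h0
    rw [h0, zero_pow hγ.ne'] at hω
    exact ha (inv_eq_zero.1 (neg_eq_zero.1 hω.symm))
  have hωn : γ.leadingCoeff * ω ^ n = -1 := by
    rw [hω, mul_neg, mul_inv_cancel₀ ha]
  -- two composed polynomials
  set q₁ : Polynomial ℂ := γ.comp (C ω * X) with hq₁
  set q₂ : Polynomial ℂ := γ.comp (C ω * X + C c) with hq₂
  have hlin1 : (C ω * X : Polynomial ℂ).natDegree = 1 := by
    simpa using Polynomial.natDegree_C_mul_X ω hω0
  have hlin2 : (C ω * X + C c : Polynomial ℂ).natDegree = 1 := by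
    rw [Polynomial.natDegree_add_C, hlin1]
  have hl1 : (C ω * X : Polynomial ℂ).leadingCoeff = ω := by
    simp [Polynomial.leadingCoeff, hlin1]
  have hl2 : (C ω * X + C c : Polynomial ℂ).leadingCoeff = ω := by
    rw [Polynomial.leadingCoeff, hlin2]
    simp [Polynomial.coeff_add, Polynomial.coeff_C, Polynomial.coeff_C_mul,
      Polynomial.coeff_X_one]
  have hq₁d : q₁.natDegree = n := by rw [hq₁, Polynomial.natDegree_comp, hlin1, mul_one]
  have hq₂d : q₂.natDegree = n := by rw [hq₂, Polynomial.natDegree_comp, hlin2, mul_one]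
  have hq₁l : q₁.leadingCoeff = -1 := by
    rw [hq₁, Polynomial.leadingCoeff_comp (by rw [hlin1]; norm_num), hl1]; exact hωn
  have hq₂l : q₂.leadingCoeff = -1 := by
    rw [hq₂, Polynomial.leadingCoeff_comp (by rw [hlin2]; norm_num), hl2]; exact hωn
  have ht1 := re_eval_tendsto_atBot q₁ (hq₁d ▸ hγ) hq₁l
  have ht2 := re_eval_tendsto_atBot q₂ (hq₂d ▸ hγ) hq₂l
  have he1 : Tendsto (fun r : ℝ => Complex.exp (γ.eval (ω * r))) atTop (nhds 0) := by
    rw [tendsto_zero_iff_norm_tendsto_zero]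
    have : ∀ r : ℝ, ‖Complex.exp (γ.eval (ω * r))‖ = Real.exp ((q₁.eval (r:ℂ)).re) := by
      intro r; rw [Complex.norm_exp, hq₁]; simp [Polynomial.eval_comp]
    simp only [this]
    exact Real.tendsto_exp_atBot.comp ht1
  have he2 : Tendsto (fun r : ℝ => Complex.exp (γ.eval (ω * r + c))) atTop (nhds 0) := by
    rw [tendsto_zero_iff_norm_tendsto_zero]
    have : ∀ r : ℝ, ‖Complex.exp (γ.eval (ω * r + c))‖ = Real.exp ((q₂.eval (r:ℂ)).re) := by
      intro r; rw [Complex.norm_exp, hq₂]; simp [Polynomial.eval_comp]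
    simp only [this]
    exact Real.tendsto_exp_atBot.comp ht2
  -- multiply the functional equation by exp(γ(z))
  have key : ∀ r : ℝ, e₁ * Complex.exp (γ.eval (ω * r)) + (e₁ - e₂)
      = (e₂ - e₁) * (Complex.exp (γ.eval (ω * r + c)) - Complex.exp (γ.eval (ω * r)))
          * Complex.exp (γ.eval (ω * r)) := by
    intro r
    have := h (ω * r)
    have hmul := congrArg (· * Complex.exp (γ.eval (ω * r))) this
    rw [add_mul, mul_assoc, ← Complex.exp_add, neg_add_cancel, Complex.exp_zero, mul_one] at hmul
    convert hmul using 2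
  have hL : Tendsto (fun r : ℝ => e₁ * Complex.exp (γ.eval (ω * r)) + (e₁ - e₂)) atTop
      (nhds (e₁ - e₂)) := by
    have := (he1.const_mul e₁).add_const (e₁ - e₂)
    simpa using this
  have hR : Tendsto (fun r : ℝ => (e₂ - e₁) * (Complex.exp (γ.eval (ω * r + c)) - Complex.exp (γ.eval (ω * r))) * Complex.exp (γ.eval (ω * r))) atTop (nhds 0) := by
    have := (((he2.sub he1).const_mul (e₂ - e₁)).mul he1)
    simpa using this
  have : e₁ - e₂ = 0 := tendsto_nhds_unique (by simpa only [key] using hL) hR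
  exact sub_eq_zero.1 this
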